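/- Let h ∈ ℝ^p, S ⊂ {1,...,p}, and real numbers η ∈ (0,1), λ > 0, s > 0 satisfy (1-η)‖h_{S^c}‖₁ ≤ (1+η)‖h_S‖₁ + 2sλ. If additionally (1+η)‖h_S‖₁ + 2sλ ≥ (1-η)ξ‖h_S‖₁ for some ξ > (1+η)/(1-η), then ‖h‖₁ ≤ (2sλ/(1-η))·(2/((1-η)ξ - (1+η)) + 1). -/

import Mathlib

open Finset

/-- Case (I) of the Elastic Net consistency proof: if
`(1-η)‖h_{Sᶜ}‖₁ ≤ (1+η)‖h_S‖₁ + 2sλ` and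
`(1+η)‖h_S‖₁ + 2sλ ≥ (1-η)ξ‖h_S‖₁` with `ξ > (1+η)/(1-η)`, then
`‖h‖₁ ≤ (2sλ/(1-η))(2/((1-η)ξ - (1+η)) + 1)`. -/
theorem l1_bound_case_one
    {p : ℕ} (h : Fin p → ℝ) (S : Finset (Fin p))
    (η lam s ξ : ℝ) (hη0 : 0 < η) (hη1 : η < 1) (hlam : 0 < lam) (hs : 0 < s)
    (hξ : (1 + η) / (1 - η) < ξ)
    (h1 : (1 - η) * ∑ i ∈ Sᶜ, |h i| ≤ (1 + η) * (∑ i ∈ S, |h i|) + 2 * s * lam)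
    (h2 : (1 - η) * ξ * (∑ i ∈ S, |h i|)
        ≤ (1 + η) * (∑ i ∈ S, |h i|) + 2 * s * lam) :
    ∑ i, |h i|
      ≤ (2 * s * lam / (1 - η)) * (2 / ((1 - η) * ξ - (1 + η)) + 1) := by
  have hη : (0:ℝ) < 1 - η := by linarith
  have hD : (0:ℝ) < (1 - η) * ξ - (1 + η) := by
    have := (div_lt_iff₀ hη).mp hξ
    nlinarith
  have hsplit : ∑ i, |h i| = (∑ i ∈ S, |h i|) + ∑ i ∈ Sᶜ, |h i| :=
    (Finset.sum_add_sum_compl S _).symm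
  set A := ∑ i ∈ S, |h i| with hA
  set B := ∑ i ∈ Sᶜ, |h i| with hB
  rw [hsplit]
  have hAbound : A ≤ 2 * s * lam / ((1 - η) * ξ - (1 + η)) := by
    rw [le_div_iff₀ hD]; nlinarith
  have hBbound : B ≤ ((1 + η) * A + 2 * s * lam) / (1 - η) := by
    rw [le_div_iff₀ hη]; linarith [mul_comm B (1 - η)]
  have key : A + B ≤ A * (2 / (1 - η)) + 2 * s * lam / (1 - η) := by
    have : ((1 + η) * A + 2 * s * lam) / (1 - η)
        = A * ((1 + η) / (1 - η)) + 2 * s * lam / (1 - η) := by ring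
    rw [this] at hBbound
    have heq : A * (2 / (1 - η)) = A + A * ((1 + η) / (1 - η)) := by
      field_simp; ring
    linarith
  have h2slam : (0:ℝ) ≤ 2 * s * lam := by positivity
  calc A + B ≤ A * (2 / (1 - η)) + 2 * s * lam / (1 - η) := key
    _ ≤ (2 * s * lam / ((1 - η) * ξ - (1 + η))) * (2 / (1 - η))
          + 2 * s * lam / (1 - η) := by
        gcongr
    _ = (2 * s * lam / (1 - η)) * (2 / ((1 - η) * ξ - (1 + η)) + 1) := by
        field_simp
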